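/- arXiv:2506.15602 — 2 statements merged into one kernel-verified Lean document; each statement's English description precedes it below -/
import Mathlib

section
/- Let μ be a probability distribution on S and suppose that for each 1 ≤ ℓ ≤ K the coefficient c_ℓ ∈ [0,1] satisfies both: (i) for all k with ℓ < k ≤ K and all x ∈ S_k with p(x,S_{[0,ℓ]}) > 0, c_ℓ ≤ p(x,S_ℓ) / p(x,S_{[0,ℓ]}); and (ii) c_ℓ · μ(S_{[0,ℓ]}) ≤ μ(S_ℓ). Then the mean hitting time under random initialization satisfies Σ_{x∈S} μ(x) · m(x) ≥ Σ_{ℓ=1}^{K} c_ℓ / p_max(X_ℓ, S_{[0,ℓ−1]}), where p_max(X_ℓ, S_{[0,ℓ−1]}) = max_{x∈S_ℓ} p(x, S_{[0,ℓ−1]}). -/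
open Finset

/-- A finite state space partitioned into fitness levels `S_0, …, S_K`
(`lev x = k` means `x ∈ S_k`), together with an elitist row-stochastic
transition matrix `p`. -/
structure LevelChain (S : Type*) [Fintype S] where
  /-- the number of non-optimal levels -/
  K : ℕ
  /-- the level of each state -/
  lev : S → ℕ
  one_le_K : 1 ≤ K
  lev_le : ∀ x, lev x ≤ K
  level_nonempty : ∀ k ≤ K, ∃ x, lev x = k
  /-- transition probabilities -/
  p : S → S → ℝ
  p_nonneg : ∀ x y, 0 ≤ p x y
  p_row_sum : ∀ x, ∑ y, p x y = 1
  elitist : ∀ x y, lev x < lev y → p x y = 0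

variable {S : Type*} [Fintype S]

/-- The fitness level `S_k`. -/
def LevelChain.level (c : LevelChain S) (k : ℕ) : Finset S :=
  Finset.univ.filter fun x => c.lev x = k

/-- The union of levels `S_{[i,j]} = S_i ∪ ⋯ ∪ S_j`. -/
def LevelChain.levels (c : LevelChain S) (i j : ℕ) : Finset S :=
  Finset.univ.filter fun x => i ≤ c.lev x ∧ c.lev x ≤ j

/-- `p(x, A) = Σ_{y ∈ A} p(x, y)`. -/
def LevelChain.pSet (c : LevelChain S) (x : S) (A : Finset S) : ℝ :=
  ∑ y ∈ A, c.p x y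

/-- The standing reachability assumption: from every non-optimal state one can
move to a better level with positive probability. -/
def LevelChain.Reachable (c : LevelChain S) : Prop :=
  ∀ k, 1 ≤ k → k ≤ c.K → ∀ x, c.lev x = k → 0 < c.pSet x (c.levels 0 (k - 1))

/-- Conditional transition probability `r(x, S_j)`:
`r(x,S_j) = p(x,S_j)/(1 − p(x,S_k))` for `j ≠ k = lev x`, and `r(x,S_k) = 0`. -/
noncomputable def LevelChain.r (c : LevelChain S) (x : S) (j : ℕ) : ℝ :=
  if j = c.lev x then 0
  else c.pSet x (c.level j) / (1 - c.pSet x (c.level (c.lev x)))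

/-- `r_min(X_k, S_j) = min_{x ∈ S_k} r(x, S_j)`. -/
noncomputable def LevelChain.rmin (c : LevelChain S) (k j : ℕ) : ℝ :=
  sInf ((fun x => c.r x j) '' {x | c.lev x = k})

/-- `r_max(X_k, S_j) = max_{x ∈ S_k} r(x, S_j)`. -/
noncomputable def LevelChain.rmax (c : LevelChain S) (k j : ℕ) : ℝ :=
  sSup ((fun x => c.r x j) '' {x | c.lev x = k})

/-- `m` is the mean hitting time of the optimal level `S_0`. -/
def LevelChain.IsMeanHittingTime (c : LevelChain S) (m : S → ℝ) : Prop :=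
  (∀ x, 0 ≤ m x) ∧
  (∀ x, c.lev x = 0 → m x = 0) ∧
  (∀ x, c.lev x ≠ 0 → m x = 1 + ∑ y, c.p x y * m y)

/-- `mbar` is the mean level-leaving time on `S ∖ S_0`. -/
def LevelChain.IsLevelLeavingTime (c : LevelChain S) (mbar : S → ℝ) : Prop :=
  (∀ x, c.lev x ≠ 0 → 0 ≤ mbar x) ∧
  (∀ x, c.lev x ≠ 0 → mbar x = 1 + ∑ y ∈ c.level (c.lev x), c.p x y * mbar y)

/-- `h ℓ x` is the probability of hitting level `S_ℓ` starting from `x`. -/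
def LevelChain.IsHitProb (c : LevelChain S) (h : ℕ → S → ℝ) : Prop :=
  (∀ ℓ x, 0 ≤ h ℓ x ∧ h ℓ x ≤ 1) ∧
  (∀ ℓ x, c.lev x = ℓ → h ℓ x = 1) ∧
  (∀ ℓ x, c.lev x < ℓ → h ℓ x = 0) ∧
  (∀ ℓ x, ℓ < c.lev x →
    h ℓ x = ∑ y ∈ c.levels ℓ (c.lev x), c.p x y * h ℓ y)

namespace LevelChain
variable [DecidableEq S] (c : LevelChain S)

lemma pSet_nonneg (x : S) (A : Finset S) : 0 ≤ c.pSet x A :=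
  Finset.sum_nonneg fun y _ => c.p_nonneg x y

lemma levels_eq_biUnion (j : ℕ) :
    c.levels 0 j = (Finset.range (j+1)).biUnion c.level := by
  ext x
  simp only [levels, level, Finset.mem_filter, Finset.mem_univ, true_and,
    Finset.mem_biUnion, Finset.mem_range]
  constructor
  · rintro ⟨-, h⟩; exact ⟨c.lev x, by omega, rfl⟩
  · rintro ⟨i, hi, h⟩; omega

lemma sum_levels (f : S → ℝ) (j : ℕ) :
    ∑ y ∈ c.levels 0 j, f y = ∑ i ∈ Finset.range (j+1), ∑ y ∈ c.level i, f y := by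
  rw [levels_eq_biUnion, Finset.sum_biUnion]
  intro u _ v _ huv
  simp only [Finset.disjoint_left, level, Finset.mem_filter, Finset.mem_univ, true_and]
  rintro x h1 h2; exact huv (h1 ▸ h2)

lemma levels_zero_K (f : S → ℝ) : ∑ y ∈ c.levels 0 c.K, f y = ∑ y, f y := by
  apply Finset.sum_subset (Finset.subset_univ _)
  intro y _ hy
  exfalso
  simp only [levels, Finset.mem_filter, Finset.mem_univ, true_and] at hy
  exact hy ⟨Nat.zero_le _, c.lev_le y⟩

lemma level_subset_levels (j : ℕ) : c.level j ⊆ c.levels 0 j := by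
  intro x hx
  simp only [level, levels, Finset.mem_filter, Finset.mem_univ, true_and] at *
  omega

end LevelChain

namespace LevelChain
variable (c : LevelChain S)

noncomputable def pmax (c : LevelChain S) (ℓ : ℕ) : ℝ :=
  sSup ((fun x => c.pSet x (c.levels 0 (ℓ - 1))) '' {x | c.lev x = ℓ})

lemma le_pmax (x : S) {ℓ : ℕ} (hx : c.lev x = ℓ) :
    c.pSet x (c.levels 0 (ℓ - 1)) ≤ c.pmax ℓ := by
  apply le_csSup (Set.Finite.bddAbove (Set.toFinite _))
  exact ⟨x, hx, rfl⟩

lemma pmax_pos (hreach : c.Reachable) {ℓ : ℕ} (h1 : 1 ≤ ℓ) (h2 : ℓ ≤ c.K) :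
    0 < c.pmax ℓ := by
  obtain ⟨x, hx⟩ := c.level_nonempty ℓ h2
  exact lt_of_lt_of_le (hreach ℓ h1 h2 x hx) (c.le_pmax x hx)

/-- The per-level potential. -/
noncomputable def phi (c : LevelChain S) (cl : ℕ → ℝ) (k : ℕ) : ℝ :=
  (∑ i ∈ Finset.Icc 1 (k-1), cl i * (c.pmax i)⁻¹) + (c.pmax k)⁻¹

end LevelChain


lemma aux_key (b cl a : ℕ → ℝ) (n : ℕ)
    (hb : ∀ j, 1 ≤ j → j ≤ n → 0 ≤ b j)
    (hc : ∀ j, 1 ≤ j → j ≤ n → cl j * (∑ i ∈ Finset.range (j+1), a i) ≤ a j) :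
    (∑ i ∈ Finset.range (n+1), a i) * (∑ j ∈ Finset.Icc 1 n, cl j * b j) ≤
    ∑ j ∈ Finset.Icc 1 n, a j * ((∑ i ∈ Finset.Icc 1 (j-1), cl i * b i) + b j) := by
  induction n with
  | zero => simp
  | succ n ih =>
    have h1 : ∀ (f : ℕ → ℝ), ∑ j ∈ Finset.Icc 1 (n+1), f j = (∑ j ∈ Finset.Icc 1 n, f j) + f (n+1) := by
      intro f
      exact Finset.sum_Icc_succ_top (by omega) f
    rw [h1, h1, Finset.sum_range_succ]
    have ihh := ih (fun j h1 h2 => hb j h1 (by omega)) (fun j h1 h2 => hc j h1 (by omega))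
    have hcn := hc (n+1) (by omega) le_rfl
    have hbn := hb (n+1) (by omega) le_rfl
    have key : cl (n+1) * (∑ i ∈ Finset.range (n+2), a i) * b (n+1) ≤ a (n+1) * b (n+1) :=
      mul_le_mul_of_nonneg_right hcn hbn
    rw [Finset.sum_range_succ] at key
    have hs : ∑ i ∈ Finset.Icc 1 (n+1-1), cl i * b i = ∑ i ∈ Finset.Icc 1 n, cl i * b i := by norm_num
    rw [hs]
    nlinarith [ihh, key]

lemma pointwise_bound [DecidableEq S]
    (c : LevelChain S) (hreach : c.Reachable)
    (m : S → ℝ) (hm : c.IsMeanHittingTime m)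
    (cl : ℕ → ℝ)
    (hcond1 : ∀ ℓ, 1 ≤ ℓ → ℓ ≤ c.K → ∀ k, ℓ < k → k ≤ c.K → ∀ x, c.lev x = k →
      0 < c.pSet x (c.levels 0 ℓ) →
      cl ℓ ≤ c.pSet x (c.level ℓ) / c.pSet x (c.levels 0 ℓ)) :
    ∀ k, k ≤ c.K → 1 ≤ k → ∀ x, c.lev x = k → c.phi cl k ≤ m x := by
  intro k
  induction k using Nat.strong_induction_on with
  | _ k ih =>
  intro hkK hk1 x hx
  -- minimizer of m over level k
  have hxmem : x ∈ c.level k := by simp [LevelChain.level, hx]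
  obtain ⟨z, hzmem, hzmin⟩ := Finset.exists_min_image (c.level k) m ⟨x, hxmem⟩
  have hz : c.lev z = k := by
    simpa [LevelChain.level] using hzmem
  suffices h : c.phi cl k ≤ m z from h.trans (hzmin x hxmem)
  set q := c.pSet z (c.levels 0 (k-1)) with hqdef
  have hq : 0 < q := hreach k hk1 hkK z hz
  set a : ℕ → ℝ := fun j => c.pSet z (c.level j) with hadef
  -- m z equation
  have hmz : m z = 1 + ∑ y, c.p z y * m y := hm.2.2 z (by omega)
  -- restrict sum to levels 0 k
  have hrestrict : ∑ y, c.p z y * m y = ∑ y ∈ c.levels 0 k, c.p z y * m y := by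
    symm
    apply Finset.sum_subset (Finset.subset_univ _)
    intro y _ hy
    have : k < c.lev y := by
      simp only [LevelChain.levels, Finset.mem_filter, Finset.mem_univ, true_and] at hy
      omega
    rw [c.elitist z y (hz ▸ this), zero_mul]
  -- split off level k
  have hsplit : ∑ y ∈ c.levels 0 k, c.p z y * m y =
      (∑ j ∈ Finset.range k, ∑ y ∈ c.level j, c.p z y * m y)
        + ∑ y ∈ c.level k, c.p z y * m y := by
    rw [c.sum_levels, Finset.sum_range_succ]
  -- q = sum of a over range k
  have hqsum : q = ∑ j ∈ Finset.range k, a j := by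
    have : k - 1 + 1 = k := by omega
    rw [hqdef, LevelChain.pSet, c.sum_levels, this]
    simp [hadef, LevelChain.pSet]
  -- pSet z (level k) = 1 - q
  have hak : a k = 1 - q := by
    have h1 : ∑ y ∈ c.levels 0 k, c.p z y = (1:ℝ) := by
      rw [← c.p_row_sum z]
      apply Finset.sum_subset (Finset.subset_univ _)
      intro y _ hy
      have : k < c.lev y := by
        simp only [LevelChain.levels, Finset.mem_filter, Finset.mem_univ, true_and] at hy
        omega
      exact c.elitist z y (hz ▸ this)
    rw [c.sum_levels, Finset.sum_range_succ] at h1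
    have : ∑ j ∈ Finset.range k, ∑ y ∈ c.level j, c.p z y = q := by
      rw [hqsum]
      simp [hadef, LevelChain.pSet]
    rw [this] at h1
    simp only [hadef, LevelChain.pSet]
    linarith
  -- level k term bound
  have hlevk : a k * m z ≤ ∑ y ∈ c.level k, c.p z y * m y := by
    rw [hadef]
    simp only [LevelChain.pSet, Finset.sum_mul]
    apply Finset.sum_le_sum
    intro y hy
    exact mul_le_mul_of_nonneg_left (hzmin y hy) (c.p_nonneg z y)
  -- lower levels term bound
  have hlow : ∑ j ∈ Finset.Icc 1 (k-1), a j * c.phi cl j ≤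
      ∑ j ∈ Finset.range k, ∑ y ∈ c.level j, c.p z y * m y := by
    have hr : Finset.range k = insert 0 (Finset.Icc 1 (k-1)) := by
      ext j
      simp only [Finset.mem_range, Finset.mem_insert, Finset.mem_Icc]
      omega
    rw [hr, Finset.sum_insert (by simp)]
    have h0 : (0:ℝ) ≤ ∑ y ∈ c.level 0, c.p z y * m y :=
      Finset.sum_nonneg fun y _ => mul_nonneg (c.p_nonneg z y) (hm.1 y)
    have hterm : ∀ j ∈ Finset.Icc 1 (k-1),
        a j * c.phi cl j ≤ ∑ y ∈ c.level j, c.p z y * m y := by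
      intro j hj
      simp only [Finset.mem_Icc] at hj
      rw [hadef]
      simp only [LevelChain.pSet, Finset.sum_mul]
      apply Finset.sum_le_sum
      intro y hy
      have hylev : c.lev y = j := by simpa [LevelChain.level] using hy
      have := ih j (by omega) (by omega) hj.1 y hylev
      exact mul_le_mul_of_nonneg_left this (c.p_nonneg z y)
    linarith [Finset.sum_le_sum hterm]
  -- combine: q * m z ≥ 1 + ∑ a_j phi_j
  have hmain : 1 + ∑ j ∈ Finset.Icc 1 (k-1), a j * c.phi cl j ≤ q * m z := by
    have := hlevk
    rw [hak] at this
    nlinarith [hmz, hrestrict, hsplit, hlow]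
  -- key inequality: q * phi k ≤ 1 + ∑ a_j phi_j
  have hkey : q * c.phi cl k ≤ 1 + ∑ j ∈ Finset.Icc 1 (k-1), a j * c.phi cl j := by
    have hqb : q * (c.pmax k)⁻¹ ≤ 1 := by
      have hple : q ≤ c.pmax k := c.le_pmax z hz
      have hppos : 0 < c.pmax k := c.pmax_pos hreach hk1 hkK
      rw [← div_eq_mul_inv, div_le_one hppos]
      exact hple
    have hqphi : q * (∑ i ∈ Finset.Icc 1 (k-1), cl i * (c.pmax i)⁻¹) ≤
        ∑ j ∈ Finset.Icc 1 (k-1), a j * c.phi cl j := by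
      have happ := aux_key (fun i => (c.pmax i)⁻¹) cl a (k-1)
        (fun j hj1 hj2 => le_of_lt (inv_pos.mpr (c.pmax_pos hreach hj1 (by omega))))
        ?_
      · have : k - 1 + 1 = k := by omega
        rw [this, ← hqsum] at happ
        exact le_of_le_of_eq happ (by rfl)
      · intro j hj1 hj2
        have hAj : ∑ i ∈ Finset.range (j+1), a i = c.pSet z (c.levels 0 j) := by
          rw [LevelChain.pSet, c.sum_levels]; rfl
        rw [hAj]
        rcases lt_or_eq_of_le (c.pSet_nonneg z (c.levels 0 j)) with hpos | hzero
        · have := hcond1 j hj1 (by omega) k (by omega) hkK z hz hpos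
          calc cl j * c.pSet z (c.levels 0 j)
              ≤ (c.pSet z (c.level j) / c.pSet z (c.levels 0 j)) * c.pSet z (c.levels 0 j) :=
                mul_le_mul_of_nonneg_right this (le_of_lt hpos)
            _ = a j := by field_simp; rfl
        · have hsub : c.pSet z (c.level j) ≤ c.pSet z (c.levels 0 j) :=
            Finset.sum_le_sum_of_subset_of_nonneg (c.level_subset_levels j)
              (fun y _ _ => c.p_nonneg z y)
          have ha0 : a j = 0 :=
            le_antisymm (hsub.trans hzero.symm.le) (c.pSet_nonneg z (c.level j))
          rw [ha0, ← hzero]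
          norm_num
    rw [LevelChain.phi, mul_add]
    linarith
  have := hkey.trans hmain
  exact le_of_mul_le_mul_left (by linarith) hq

theorem random_init_lower_bound'
    (c : LevelChain S) (hreach : c.Reachable)
    (m : S → ℝ) (hm : c.IsMeanHittingTime m)
    (μ : S → ℝ) (hμ0 : ∀ x, 0 ≤ μ x) (hμ1 : ∑ x, μ x = 1)
    (cl : ℕ → ℝ)
    (hcl01 : ∀ ℓ, 1 ≤ ℓ → ℓ ≤ c.K → 0 ≤ cl ℓ ∧ cl ℓ ≤ 1)
    (hcond1 : ∀ ℓ, 1 ≤ ℓ → ℓ ≤ c.K → ∀ k, ℓ < k → k ≤ c.K → ∀ x, c.lev x = k →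
      0 < c.pSet x (c.levels 0 ℓ) →
      cl ℓ ≤ c.pSet x (c.level ℓ) / c.pSet x (c.levels 0 ℓ))
    (hcond2 : ∀ ℓ, 1 ≤ ℓ → ℓ ≤ c.K →
      cl ℓ * (∑ x ∈ c.levels 0 ℓ, μ x) ≤ ∑ x ∈ c.level ℓ, μ x) :
    ∑ x, μ x * m x ≥ ∑ ℓ ∈ Finset.Icc 1 c.K,
      cl ℓ / sSup ((fun x => c.pSet x (c.levels 0 (ℓ - 1))) '' {x | c.lev x = ℓ}) := by
  classical
  set a : ℕ → ℝ := fun j => ∑ x ∈ c.level j, μ x with hadef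
  -- RHS equals Φ_K
  have hrhs : ∑ ℓ ∈ Finset.Icc 1 c.K,
      cl ℓ / sSup ((fun x => c.pSet x (c.levels 0 (ℓ - 1))) '' {x | c.lev x = ℓ})
      = ∑ ℓ ∈ Finset.Icc 1 c.K, cl ℓ * (c.pmax ℓ)⁻¹ := by
    apply Finset.sum_congr rfl
    intro ℓ _
    rw [div_eq_mul_inv]; rfl
  -- total mass
  have hmass : ∑ i ∈ Finset.range (c.K + 1), a i = 1 := by
    rw [hadef, ← c.sum_levels μ c.K, c.levels_zero_K, hμ1]
  -- key lemma application
  have hkey := aux_key (fun i => (c.pmax i)⁻¹) cl a c.K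
    (fun j hj1 hj2 => le_of_lt (inv_pos.mpr (c.pmax_pos hreach hj1 hj2)))
    (by
      intro j hj1 hj2
      have : ∑ i ∈ Finset.range (j + 1), a i = ∑ x ∈ c.levels 0 j, μ x := by
        rw [hadef, ← c.sum_levels μ j]
      rw [this]
      exact hcond2 j hj1 hj2)
  rw [hmass, one_mul] at hkey
  -- lower-bound the μ-weighted sum by level sums times phi
  have hsum : ∑ j ∈ Finset.Icc 1 c.K, a j * c.phi cl j ≤ ∑ x, μ x * m x := by
    rw [← c.levels_zero_K (fun x => μ x * m x), c.sum_levels]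
    have hr : Finset.range (c.K + 1) = insert 0 (Finset.Icc 1 c.K) := by
      ext j
      simp only [Finset.mem_range, Finset.mem_insert, Finset.mem_Icc]
      omega
    rw [hr, Finset.sum_insert (by simp)]
    have h0 : (0:ℝ) ≤ ∑ x ∈ c.level 0, μ x * m x :=
      Finset.sum_nonneg fun y _ => mul_nonneg (hμ0 y) (hm.1 y)
    have hterm : ∀ j ∈ Finset.Icc 1 c.K,
        a j * c.phi cl j ≤ ∑ x ∈ c.level j, μ x * m x := by
      intro j hj
      simp only [Finset.mem_Icc] at hj
      rw [hadef]
      simp only [Finset.sum_mul]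
      apply Finset.sum_le_sum
      intro y hy
      have hylev : c.lev y = j := by simpa [LevelChain.level] using hy
      have := pointwise_bound c hreach m hm cl hcond1 j hj.2 hj.1 y hylev
      exact mul_le_mul_of_nonneg_left this (hμ0 y)
    linarith [Finset.sum_le_sum hterm]
  -- phi unfolding in hkey
  have hphi : ∀ j, a j * ((∑ i ∈ Finset.Icc 1 (j-1), cl i * (c.pmax i)⁻¹) + (c.pmax j)⁻¹)
      = a j * c.phi cl j := fun j => rfl
  simp only [hphi] at hkey
  rw [ge_iff_le, hrhs]
  linarith

/-- Type-`c_ℓ` lower bound under random initialization `μ`: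
if each `c_ℓ ∈ [0,1]` satisfies
(i) `c_ℓ ≤ p(x,S_ℓ)/p(x,S_{[0,ℓ]})` for all `ℓ < k ≤ K` and `x ∈ S_k` with
`p(x,S_{[0,ℓ]}) > 0`, and (ii) `c_ℓ·μ(S_{[0,ℓ]}) ≤ μ(S_ℓ)`, then
`Σ_x μ(x)·m(x) ≥ Σ_{ℓ=1}^{K} c_ℓ / p_max(X_ℓ, S_{[0,ℓ−1]})`. -/
theorem random_init_lower_bound
    (c : LevelChain S) (hreach : c.Reachable)
    (m : S → ℝ) (hm : c.IsMeanHittingTime m)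
    (μ : S → ℝ) (hμ0 : ∀ x, 0 ≤ μ x) (hμ1 : ∑ x, μ x = 1)
    (cl : ℕ → ℝ)
    (hcl01 : ∀ ℓ, 1 ≤ ℓ → ℓ ≤ c.K → 0 ≤ cl ℓ ∧ cl ℓ ≤ 1)
    (hcond1 : ∀ ℓ, 1 ≤ ℓ → ℓ ≤ c.K → ∀ k, ℓ < k → k ≤ c.K → ∀ x, c.lev x = k →
      0 < c.pSet x (c.levels 0 ℓ) →
      cl ℓ ≤ c.pSet x (c.level ℓ) / c.pSet x (c.levels 0 ℓ))
    (hcond2 : ∀ ℓ, 1 ≤ ℓ → ℓ ≤ c.K →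
      cl ℓ * (∑ x ∈ c.levels 0 ℓ, μ x) ≤ ∑ x ∈ c.level ℓ, μ x) :
    ∑ x, μ x * m x ≥ ∑ ℓ ∈ Finset.Icc 1 c.K,
      cl ℓ / sSup ((fun x => c.pSet x (c.levels 0 (ℓ - 1))) '' {x | c.lev x = ℓ}) :=
  random_init_lower_bound' c hreach m hm μ hμ0 hμ1 cl hcl01 hcond1 hcond2
end

section
/- Fix 1 ≤ ℓ < k ≤ K and assume that for every i with ℓ < i ≤ k there exists x ∈ S_i with p(x,S_{[0,ℓ]}) > 0. Define c*_ℓ = max_{ℓ<i≤k} max_{x∈S_i : p(x,S_{[0,ℓ]})>0} p(x,S_ℓ)/p(x,S_{[0,ℓ]}), and define recursively c*_{ℓ,ℓ} = 1 and, for j = ℓ+1, …, k, c*_{j,ℓ} = max_{x∈S_j} ( r(x,S_ℓ) + Σ_{i=ℓ+1}^{j−1} r(x,S_i) · c*_{i,ℓ} ). Then: (1) c*_{i,ℓ} ≤ c*_ℓ for every i with ℓ < i ≤ k; and (2) if for some i with ℓ < i ≤ k every x ∈ S_i satisfies p(x,S_{[0,ℓ]}) > 0 and max_{x∈S_i} p(x,S_ℓ)/p(x,S_{[0,ℓ]})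 < c*_ℓ, then c*_{i,ℓ} < c*_ℓ. -/
open Finset

variable {S : Type*} [Fintype S]

namespace LevelChainAux

lemma pSet_nonneg (c : LevelChain S) (x : S) (A : Finset S) : 0 ≤ c.pSet x A :=
  Finset.sum_nonneg fun y _ => c.p_nonneg x y

lemma pSet_levels (c : LevelChain S) (x : S) (a b : ℕ) :
    c.pSet x (c.levels a b) = ∑ t ∈ Finset.Icc a b, c.pSet x (c.level t) := by
  classical
  unfold LevelChain.pSet
  rw [← Finset.sum_biUnion]
  · congr 1
    ext y
    simp [LevelChain.levels, LevelChain.level, Finset.mem_biUnion, Finset.mem_Icc]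
  · intro s hs t ht hst
    simp only [Finset.disjoint_left, LevelChain.level, Finset.mem_filter]
    rintro y ⟨-, h1⟩ ⟨-, h2⟩
    exact hst (h1.symm.trans h2)

lemma pSet_levels_top (c : LevelChain S) (x : S) (j : ℕ) (hx : c.lev x = j) :
    c.pSet x (c.levels 0 j) = 1 := by
  rw [LevelChain.pSet,
    Finset.sum_subset (Finset.subset_univ _) (fun y _ hy => ?_)]
  · exact c.p_row_sum x
  · refine c.elitist x y ?_
    simp only [LevelChain.levels, Finset.mem_filter, Finset.mem_univ, true_and,
      Nat.zero_le, not_and, not_le] at hy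
    omega

lemma one_sub_eq (c : LevelChain S) (x : S) (j : ℕ) (hx : c.lev x = j) (hj : 1 ≤ j) :
    1 - c.pSet x (c.level j) = c.pSet x (c.levels 0 (j - 1)) := by
  have h1 := pSet_levels_top c x j hx
  obtain ⟨m, rfl⟩ : ∃ m, j = m + 1 := ⟨j - 1, (Nat.succ_pred_eq_of_pos hj).symm⟩
  rw [pSet_levels] at h1
  rw [Finset.sum_Icc_succ_top (Nat.zero_le _)] at h1
  rw [pSet_levels]
  simp only [Nat.add_sub_cancel]
  linarith

lemma split_ell (c : LevelChain S) (x : S) (j ℓ : ℕ) (hℓj : ℓ < j) :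
    c.pSet x (c.levels 0 (j - 1)) =
      c.pSet x (c.levels 0 ℓ) + ∑ t ∈ Finset.Ioo ℓ j, c.pSet x (c.level t) := by
  rw [pSet_levels, pSet_levels]
  have h1 : Finset.Icc 0 (j - 1) = Finset.Ico 0 j := by
    rw [← Finset.Ico_add_one_right_eq_Icc]
    congr 1
    omega
  have h2 : Finset.Icc 0 ℓ = Finset.Ico 0 (ℓ + 1) := by rw [Finset.Ico_add_one_right_eq_Icc]
  have h3 : Finset.Ioo ℓ j = Finset.Ico (ℓ + 1) j := rfl
  rw [h1, h2, h3, Finset.sum_Ico_consecutive _ (Nat.zero_le _) (by omega)]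

lemma pSet_level_le (c : LevelChain S) (x : S) (ℓ : ℕ) :
    c.pSet x (c.level ℓ) ≤ c.pSet x (c.levels 0 ℓ) := by
  refine Finset.sum_le_sum_of_subset_of_nonneg ?_ (fun y _ _ => c.p_nonneg x y)
  intro y hy
  simp only [LevelChain.level, Finset.mem_filter, Finset.mem_univ, true_and] at hy
  simp [LevelChain.levels, hy]

/-- Core estimate: the value at a single state `x` is bounded by the
"convex combination" expression. -/
lemma fval_le (c : LevelChain S) (ℓ j : ℕ) (x : S) (hx : c.lev x = j)
    (hℓj : ℓ < j)
    (hD : 0 < c.pSet x (c.levels 0 (j - 1)))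
    (cstar : ℕ → ℝ) (clstar B : ℝ)
    (hc : ∀ t ∈ Finset.Ioo ℓ j, cstar t ≤ clstar)
    (hB : c.pSet x (c.level ℓ) ≤ B * c.pSet x (c.levels 0 ℓ)) :
    c.r x ℓ + ∑ t ∈ Finset.Ioo ℓ j, c.r x t * cstar t ≤
      (B * c.pSet x (c.levels 0 ℓ) +
        clstar * ∑ t ∈ Finset.Ioo ℓ j, c.pSet x (c.level t)) /
        c.pSet x (c.levels 0 (j - 1)) := by
  have hj1 : 1 ≤ j := by omega
  have hDeq := one_sub_eq c x j hx hj1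
  set D := c.pSet x (c.levels 0 (j - 1)) with hDdef
  have hrℓ : c.r x ℓ = c.pSet x (c.level ℓ) / D := by
    rw [LevelChain.r, if_neg (by omega : ¬ ℓ = c.lev x), hx, hDeq]
  have hrt : ∀ t ∈ Finset.Ioo ℓ j, c.r x t = c.pSet x (c.level t) / D := by
    intro t ht
    simp only [Finset.mem_Ioo] at ht
    rw [LevelChain.r, if_neg (by omega : ¬ t = c.lev x), hx, hDeq]
  rw [hrℓ, Finset.sum_congr rfl (fun t ht => by rw [hrt t ht])]
  have : ∀ t ∈ Finset.Ioo ℓ j,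
      c.pSet x (c.level t) / D * cstar t = c.pSet x (c.level t) * cstar t / D := by
    intro t _; ring
  rw [Finset.sum_congr rfl this, ← Finset.sum_div, ← add_div,
    div_le_div_iff_of_pos_right hD]
  refine add_le_add hB ?_
  rw [Finset.mul_sum]
  refine Finset.sum_le_sum fun t ht => ?_
  calc c.pSet x (c.level t) * cstar t ≤ c.pSet x (c.level t) * clstar :=
        mul_le_mul_of_nonneg_left (hc t ht) (pSet_nonneg c x _)
    _ = clstar * c.pSet x (c.level t) := mul_comm _ _

end LevelChainAux

open LevelChainAux in
/-- The best Type-`c_{k,ℓ}` upper-bound coefficients Pareto dominate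
the best Type-`c_ℓ` coefficient: with
`c*_ℓ = max_{ℓ<i≤k} max_{x∈S_i : p(x,S_{[0,ℓ]})>0} p(x,S_ℓ)/p(x,S_{[0,ℓ]})` and
`c*_{ℓ,ℓ} = 1`, `c*_{j,ℓ} = max_{x∈S_j}( r(x,S_ℓ) + Σ_{i=ℓ+1}^{j−1} r(x,S_i)·c*_{i,ℓ} )`,
we have (1) `c*_{i,ℓ} ≤ c*_ℓ` for all `ℓ < i ≤ k`, and (2) strict inequality at any `i`
where `max_{x∈S_i} p(x,S_ℓ)/p(x,S_{[0,ℓ]}) < c*_ℓ` (all `x ∈ S_i` having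
`p(x,S_{[0,ℓ]}) > 0`). -/
theorem best_typeCkl_dominates_typeCl_upper
    (c : LevelChain S) (hreach : c.Reachable)
    (ℓ k : ℕ) (hℓ : 1 ≤ ℓ) (hℓk : ℓ < k) (hk : k ≤ c.K)
    (hex : ∀ i, ℓ < i → i ≤ k → ∃ x, c.lev x = i ∧ 0 < c.pSet x (c.levels 0 ℓ))
    (clstar : ℝ)
    (hclstar : clstar =
      sSup ((fun x => c.pSet x (c.level ℓ) / c.pSet x (c.levels 0 ℓ)) ''
        {x | ℓ < c.lev x ∧ c.lev x ≤ k ∧ 0 < c.pSet x (c.levels 0 ℓ)}))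
    (cstar : ℕ → ℝ)
    (hcstardiag : cstar ℓ = 1)
    (hcstar : ∀ j, ℓ < j → j ≤ k → cstar j =
      sSup ((fun x => c.r x ℓ + ∑ i ∈ Finset.Ioo ℓ j, c.r x i * cstar i) ''
        {x | c.lev x = j})) :
    (∀ i, ℓ < i → i ≤ k → cstar i ≤ clstar) ∧
    (∀ i, ℓ < i → i ≤ k →
      (∀ x, c.lev x = i → 0 < c.pSet x (c.levels 0 ℓ)) →
      sSup ((fun x => c.pSet x (c.level ℓ) / c.pSet x (c.levels 0 ℓ)) ''
        {x | c.lev x = i}) < clstar →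
      cstar i < clstar) := by
  -- clstar is an upper bound for the ratios
  have hbdd : ∀ (f : S → ℝ) (A : Set S), BddAbove (f '' A) :=
    fun f A => (A.toFinite.image f).bddAbove
  have hub : ∀ x, ℓ < c.lev x → c.lev x ≤ k → 0 < c.pSet x (c.levels 0 ℓ) →
      c.pSet x (c.level ℓ) / c.pSet x (c.levels 0 ℓ) ≤ clstar := by
    intro x h1 h2 h3
    rw [hclstar]
    exact le_csSup (hbdd _ _) ⟨x, ⟨h1, h2, h3⟩, rfl⟩
  have hcl0 : 0 ≤ clstar := by
    obtain ⟨x, hx, hpos⟩ := hex (ℓ + 1) (by omega) (by omega)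
    refine le_trans ?_ (hub x (by omega) (by omega) hpos)
    exact div_nonneg (pSet_nonneg c x _) (le_of_lt hpos)
  -- the bound p(x,Sℓ) ≤ clstar * p(x,S_{[0,ℓ]}) for any relevant x
  have hBcl : ∀ x, ℓ < c.lev x → c.lev x ≤ k →
      c.pSet x (c.level ℓ) ≤ clstar * c.pSet x (c.levels 0 ℓ) := by
    intro x h1 h2
    rcases lt_or_eq_of_le (pSet_nonneg c x (c.levels 0 ℓ)) with h3 | h3
    · rw [← div_le_iff₀ h3]
      exact hub x h1 h2 h3
    · have := pSet_level_le c x ℓ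
      have := pSet_nonneg c x (c.level ℓ)
      nlinarith
  -- the convex combination bound
  have hconv : ∀ (x : S) (B : ℝ), B ≤ clstar → ℓ < c.lev x →
      (B * c.pSet x (c.levels 0 ℓ) +
        clstar * ∑ t ∈ Finset.Ioo ℓ (c.lev x), c.pSet x (c.level t)) /
        c.pSet x (c.levels 0 (c.lev x - 1)) ≤ clstar := by
    intro x B hB h1
    have hD0 : 0 ≤ c.pSet x (c.levels 0 (c.lev x - 1)) := pSet_nonneg c x _
    rcases lt_or_eq_of_le hD0 with hD | hD
    · rw [div_le_iff₀ hD, split_ell c x (c.lev x) ℓ h1]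
      have hP0 : 0 ≤ c.pSet x (c.levels 0 ℓ) := pSet_nonneg c x _
      nlinarith
    · rw [← hD, div_zero]; exact hcl0
  -- Part 1, by strong induction
  have key : ∀ i, ℓ < i → i ≤ k → cstar i ≤ clstar := by
    intro i
    induction i using Nat.strong_induction_on with
    | _ i ih =>
      intro hi1 hi2
      rw [hcstar i hi1 hi2]
      have hne : ({x : S | c.lev x = i}).Nonempty := by
        obtain ⟨x, hx⟩ := c.level_nonempty i (hi2.trans hk)
        exact ⟨x, hx⟩
      refine csSup_le (hne.image _) ?_
      rintro v ⟨x, hx, rfl⟩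
      simp only [Set.mem_setOf_eq] at hx
      have hD : 0 < c.pSet x (c.levels 0 (i - 1)) :=
        hreach i (by omega) (hi2.trans hk) x hx
      have hc : ∀ t ∈ Finset.Ioo ℓ i, cstar t ≤ clstar := by
        intro t ht
        simp only [Finset.mem_Ioo] at ht
        exact ih t ht.2 ht.1 (by omega)
      refine le_trans (fval_le c ℓ i x hx hi1 hD cstar clstar clstar hc
        (hBcl x (hx ▸ hi1) (hx ▸ hi2))) ?_
      have := hconv x clstar le_rfl (hx ▸ hi1)
      rw [hx] at this
      exact this
  refine ⟨key, ?_⟩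
  -- Part 2
  intro i hi1 hi2 hall hlt
  rw [hcstar i hi1 hi2]
  have hne : ({x : S | c.lev x = i}).Nonempty := by
    obtain ⟨x, hx⟩ := c.level_nonempty i (hi2.trans hk)
    exact ⟨x, hx⟩
  have hfin : ((fun x => c.r x ℓ + ∑ t ∈ Finset.Ioo ℓ i, c.r x t * cstar t) ''
      {x : S | c.lev x = i}).Finite := Set.Finite.image _ (Set.toFinite _)
  obtain ⟨x, hx, hfx⟩ := (hne.image _).csSup_mem hfin
  simp only [Set.mem_setOf_eq] at hx
  rw [← hfx]
  set Mi := sSup ((fun x => c.pSet x (c.level ℓ) / c.pSet x (c.levels 0 ℓ)) ''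
      {x : S | c.lev x = i}) with hMi
  have hP0 : 0 < c.pSet x (c.levels 0 ℓ) := hall x hx
  have hratio : c.pSet x (c.level ℓ) / c.pSet x (c.levels 0 ℓ) ≤ Mi :=
    le_csSup (hbdd _ _) ⟨x, hx, rfl⟩
  have hB : c.pSet x (c.level ℓ) ≤ Mi * c.pSet x (c.levels 0 ℓ) := by
    rw [← div_le_iff₀ hP0]; exact hratio
  have hD : 0 < c.pSet x (c.levels 0 (i - 1)) :=
    hreach i (by omega) (hi2.trans hk) x hx
  have hc : ∀ t ∈ Finset.Ioo ℓ i, cstar t ≤ clstar := by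
    intro t ht
    simp only [Finset.mem_Ioo] at ht
    exact key t ht.1 (by omega)
  refine lt_of_le_of_lt (fval_le c ℓ i x hx hi1 hD cstar clstar Mi hc hB) ?_
  rw [div_lt_iff₀ hD, split_ell c x i ℓ (by omega)]
  · have hS : 0 ≤ ∑ t ∈ Finset.Ioo ℓ i, c.pSet x (c.level t) :=
      Finset.sum_nonneg fun t _ => pSet_nonneg c x _
    nlinarith
end
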